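/- Let ψ : [0, 1/2] → ℝ be bounded and define T_ψ : [0,1] → ℝ by T_ψ(λ) := ∑_{k=0}^∞ 2^{−k}·ψ(d_ℤ(2^k·λ)) (the series converges since its terms are bounded by 2^{−k}·‖ψ‖_∞). Then f = T_ψ is the unique bounded function f : [0,1] → ℝ satisfying f(0) = f(1) together with the functional equation: f(λ) = (1/2)·f(2λ) + ψ(λ) for λ ∈ [0, 1/2], and f(λ) = (1/2)·f(2λ − 1) + ψ(1 − λ) for λ ∈ (1/2, 1]. -/

import Mathlib

noncomputable section

/-- The distance of a real number to the set of integers. -/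
noncomputable def dZ (x : ℝ) : ℝ := ⨅ k : ℤ, |x - (k : ℝ)|

lemma dZ_bdd (x : ℝ) : BddBelow (Set.range fun k : ℤ => |x - (k : ℝ)|) :=
  ⟨0, by rintro y ⟨k, rfl⟩; positivity⟩

lemma dZ_le (x : ℝ) (k : ℤ) : dZ x ≤ |x - (k : ℝ)| := ciInf_le (dZ_bdd x) k

lemma dZ_nonneg (x : ℝ) : 0 ≤ dZ x := le_ciInf fun _ => abs_nonneg _

lemma dZ_le_half (x : ℝ) : dZ x ≤ 1 / 2 := (dZ_le x (round x)).trans (abs_sub_round x)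

lemma dZ_mem (x : ℝ) : dZ x ∈ Set.Icc (0 : ℝ) (1 / 2) := ⟨dZ_nonneg x, dZ_le_half x⟩

lemma dZ_add_int (x : ℝ) (n : ℤ) : dZ (x + (n : ℝ)) = dZ x := by
  apply le_antisymm
  · refine le_ciInf fun k => (dZ_le _ (k + n)).trans_eq ?_
    push_cast; ring_nf
  · refine le_ciInf fun k => (dZ_le _ (k - n)).trans_eq ?_
    push_cast; ring_nf

lemma dZ_eq_self {l : ℝ} (h0 : 0 ≤ l) (h : l ≤ 1 / 2) : dZ l = l := by
  apply le_antisymm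
  · exact (dZ_le l 0).trans_eq (by simp [abs_of_nonneg h0])
  · refine le_ciInf fun k => ?_
    rcases le_or_gt (k : ℝ) 0 with hk | hk
    · have : l ≤ l - k := by linarith
      exact this.trans (le_abs_self _)
    · have hk1 : (1 : ℝ) ≤ (k : ℝ) := by exact_mod_cast hk
      have : l ≤ (k : ℝ) - l := by linarith
      rw [abs_sub_comm]; exact this.trans (le_abs_self _)

lemma dZ_eq_one_sub {l : ℝ} (h0 : 1 / 2 ≤ l) (h : l ≤ 1) : dZ l = 1 - l := by
  apply le_antisymm
  · refine (dZ_le l 1).trans_eq ?_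
    rw [abs_sub_comm]; simp [abs_of_nonneg (by linarith : (0:ℝ) ≤ 1 - l)]
  · refine le_ciInf fun k => ?_
    rcases le_or_gt (k : ℝ) 0 with hk | hk
    · have : 1 - l ≤ l - k := by linarith
      exact this.trans (le_abs_self _)
    · have hk1 : (1 : ℝ) ≤ (k : ℝ) := by exact_mod_cast hk
      have : 1 - l ≤ (k : ℝ) - l := by linarith
      rw [abs_sub_comm]; exact this.trans (le_abs_self _)

/-- the Takagi-type function `T_ψ` is the unique bounded solution with
`f(0)=f(1)` of the dyadic functional equation. -/
theorem stmt2 (ψ : ℝ → ℝ) (hb : ∃ C : ℝ, ∀ t ∈ Set.Icc (0 : ℝ) (1 / 2), |ψ t| ≤ C)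
    (T : ℝ → ℝ) (hT : ∀ l, T l = ∑' k : ℕ, (1 / 2 : ℝ) ^ k * ψ (dZ (2 ^ k * l))) :
    ((∃ C : ℝ, ∀ l ∈ Set.Icc (0 : ℝ) 1, |T l| ≤ C) ∧ T 0 = T 1 ∧
      (∀ l ∈ Set.Icc (0 : ℝ) (1 / 2), T l = 2⁻¹ * T (2 * l) + ψ l) ∧
      (∀ l ∈ Set.Ioc (1 / 2 : ℝ) 1, T l = 2⁻¹ * T (2 * l - 1) + ψ (1 - l))) ∧
    (∀ f : ℝ → ℝ, (∃ C : ℝ, ∀ l ∈ Set.Icc (0 : ℝ) 1, |f l| ≤ C) → f 0 = f 1 →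
      (∀ l ∈ Set.Icc (0 : ℝ) (1 / 2), f l = 2⁻¹ * f (2 * l) + ψ l) →
      (∀ l ∈ Set.Ioc (1 / 2 : ℝ) 1, f l = 2⁻¹ * f (2 * l - 1) + ψ (1 - l)) →
      Set.EqOn f T (Set.Icc (0 : ℝ) 1)) := by
  obtain ⟨C, hC⟩ := hb
  have hψ : ∀ x : ℝ, |ψ (dZ x)| ≤ C := fun x => hC _ (dZ_mem x)
  have hC0 : 0 ≤ C := (abs_nonneg _).trans (hψ 0)
  have hgeo : Summable (fun k : ℕ => (1 / 2 : ℝ) ^ k * C) :=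
    (summable_geometric_of_lt_one (by norm_num) (by norm_num)).mul_right C
  have hsum : ∀ l : ℝ, Summable (fun k : ℕ => (1 / 2 : ℝ) ^ k * ψ (dZ (2 ^ k * l))) := by
    intro l
    refine Summable.of_norm_bounded hgeo fun k => ?_
    rw [Real.norm_eq_abs, abs_mul, abs_of_nonneg (by positivity : (0:ℝ) ≤ (1/2:ℝ)^k)]
    exact mul_le_mul_of_nonneg_left (hψ _) (by positivity)
  -- bound for T
  have hTbound : ∀ l : ℝ, |T l| ≤ 2 * C := by
    intro l
    rw [hT l]
    have h1 : ‖∑' k : ℕ, (1 / 2 : ℝ) ^ k * ψ (dZ (2 ^ k * l))‖ ≤ ∑' k : ℕ, (1 / 2 : ℝ) ^ k * C := by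
      refine tsum_of_norm_bounded hgeo.hasSum fun k => ?_
      rw [Real.norm_eq_abs, abs_mul, abs_of_nonneg (by positivity : (0:ℝ) ≤ (1/2:ℝ)^k)]
      exact mul_le_mul_of_nonneg_left (hψ _) (by positivity)
    rw [Real.norm_eq_abs] at h1
    refine h1.trans ?_
    rw [tsum_mul_right, tsum_geometric_of_lt_one (by norm_num) (by norm_num)]
    norm_num
  -- the half-equation
  have heq1 : ∀ l ∈ Set.Icc (0 : ℝ) (1 / 2), T l = 2⁻¹ * T (2 * l) + ψ l := by
    intro l hl
    rw [hT l, Summable.tsum_eq_zero_add (hsum l)]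
    have h0 : (1 / 2 : ℝ) ^ (0 : ℕ) * ψ (dZ (2 ^ (0 : ℕ) * l)) = ψ l := by
      simp [dZ_eq_self hl.1 hl.2]
    have hshift : ∀ k : ℕ, (1 / 2 : ℝ) ^ (k + 1) * ψ (dZ (2 ^ (k + 1) * l))
        = 2⁻¹ * ((1 / 2 : ℝ) ^ k * ψ (dZ (2 ^ k * (2 * l)))) := by
      intro k
      have : (2 : ℝ) ^ (k + 1) * l = 2 ^ k * (2 * l) := by ring
      rw [this]; ring
    rw [h0]
    simp_rw [hshift]
    rw [tsum_mul_left, hT (2 * l)]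
    ring
  -- the other half-equation
  have heq2 : ∀ l ∈ Set.Ioc (1 / 2 : ℝ) 1, T l = 2⁻¹ * T (2 * l - 1) + ψ (1 - l) := by
    intro l hl
    rw [hT l, Summable.tsum_eq_zero_add (hsum l)]
    have h0 : (1 / 2 : ℝ) ^ (0 : ℕ) * ψ (dZ (2 ^ (0 : ℕ) * l)) = ψ (1 - l) := by
      simp [dZ_eq_one_sub hl.1.le hl.2]
    have hshift : ∀ k : ℕ, (1 / 2 : ℝ) ^ (k + 1) * ψ (dZ (2 ^ (k + 1) * l))
        = 2⁻¹ * ((1 / 2 : ℝ) ^ k * ψ (dZ (2 ^ k * (2 * l - 1)))) := by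
      intro k
      have harg : (2 : ℝ) ^ (k + 1) * l = 2 ^ k * (2 * l - 1) + ((2 ^ k : ℤ) : ℝ) := by
        push_cast; ring
      rw [harg, dZ_add_int]; ring
    rw [h0]
    simp_rw [hshift]
    rw [tsum_mul_left, hT (2 * l - 1)]
    ring
  -- T 0 = T 1
  have hT01 : T 0 = T 1 := by
    rw [hT 0, hT 1]
    congr 1; funext k
    have h1 : (2 : ℝ) ^ k * 0 = 0 := by ring
    have h2 : (2 : ℝ) ^ k * 1 = 0 + ((2 ^ k : ℤ) : ℝ) := by push_cast; ring
    rw [h1, h2, dZ_add_int]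
  refine ⟨⟨⟨2 * C, fun l _ => hTbound l⟩, hT01, heq1, heq2⟩, ?_⟩
  -- uniqueness
  rintro f ⟨Cf, hCf⟩ _ hf1 hf2 l hl
  have hM0 : 0 ≤ Cf := (abs_nonneg _).trans (hCf 0 (by norm_num))
  set M : ℝ := Cf + 2 * C with hMdef
  have key : ∀ n : ℕ, ∀ x ∈ Set.Icc (0 : ℝ) 1, |f x - T x| ≤ (1 / 2 : ℝ) ^ n * M := by
    intro n
    induction n with
    | zero =>
      intro x hx
      simp only [pow_zero, one_mul, hMdef]
      calc |f x - T x| ≤ |f x| + |T x| := abs_sub _ _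
        _ ≤ Cf + 2 * C := add_le_add (hCf x hx) (hTbound x)
    | succ n ih =>
      intro x hx
      rcases le_or_gt x (1 / 2) with hx2 | hx2
      · have hx' : x ∈ Set.Icc (0 : ℝ) (1 / 2) := ⟨hx.1, hx2⟩
        have h2x : 2 * x ∈ Set.Icc (0 : ℝ) 1 := ⟨by linarith [hx.1], by linarith⟩
        rw [hf1 x hx', heq1 x hx']
        have : 2⁻¹ * f (2 * x) + ψ x - (2⁻¹ * T (2 * x) + ψ x)
            = 2⁻¹ * (f (2 * x) - T (2 * x)) := by ring
        rw [this, abs_mul, abs_of_nonneg (by norm_num : (0:ℝ) ≤ 2⁻¹)]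
        calc 2⁻¹ * |f (2 * x) - T (2 * x)| ≤ 2⁻¹ * ((1 / 2 : ℝ) ^ n * M) :=
              mul_le_mul_of_nonneg_left (ih _ h2x) (by norm_num)
          _ = (1 / 2 : ℝ) ^ (n + 1) * M := by ring
      · have hx' : x ∈ Set.Ioc (1 / 2 : ℝ) 1 := ⟨hx2, hx.2⟩
        have h2x : 2 * x - 1 ∈ Set.Icc (0 : ℝ) 1 := ⟨by linarith, by linarith [hx.2]⟩
        rw [hf2 x hx', heq2 x hx']
        have : 2⁻¹ * f (2 * x - 1) + ψ (1 - x) - (2⁻¹ * T (2 * x - 1) + ψ (1 - x))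
            = 2⁻¹ * (f (2 * x - 1) - T (2 * x - 1)) := by ring
        rw [this, abs_mul, abs_of_nonneg (by norm_num : (0:ℝ) ≤ 2⁻¹)]
        calc 2⁻¹ * |f (2 * x - 1) - T (2 * x - 1)| ≤ 2⁻¹ * ((1 / 2 : ℝ) ^ n * M) :=
              mul_le_mul_of_nonneg_left (ih _ h2x) (by norm_num)
          _ = (1 / 2 : ℝ) ^ (n + 1) * M := by ring
  have hlim : Filter.Tendsto (fun n : ℕ => (1 / 2 : ℝ) ^ n * M) Filter.atTop (nhds 0) := by
    have := (tendsto_pow_atTop_nhds_zero_of_lt_one (by norm_num : (0:ℝ) ≤ 1/2)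
      (by norm_num : (1/2:ℝ) < 1)).mul_const M
    simpa using this
  have hle : |f l - T l| ≤ 0 :=
    ge_of_tendsto hlim (Filter.Eventually.of_forall fun n => key n l hl)
  have := abs_nonneg (f l - T l)
  have hz : f l - T l = 0 := abs_eq_zero.mp (le_antisymm hle this)
  linarith
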